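/- Let m ≡ 2 (mod 4) with m ≥ 6, n = 2^m − 1, and a = 2^{(m+4)/2} − 1. Then for every integer k with 1 ≤ k ≤ 2^{(m−4)/2} or with 2^m − 2^{(m−4)/2} − 1 ≤ k ≤ 2^m − 2, the residue a·k mod n lies in T_{(1,m)}. -/

import Mathlib

open Polynomial

noncomputable def wt2 (a : ℕ) : ℕ := (Nat.digits 2 a).sum

noncomputable def ell (m i : ℕ) : ℕ :=
  sInf {l : ℕ | 0 < l ∧ i * 2 ^ l % (2 ^ m - 1) = i % (2 ^ m - 1)}

noncomputable def coset (m i : ℕ) : Finset ℕ :=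
  (Finset.range (ell m i)).image (fun j => i * 2 ^ j % (2 ^ m - 1))

noncomputable def rho (m i : ℕ) : ℕ := ((coset m i).filter (fun x => x % 2 = 0)).card

noncomputable def vv (m i : ℕ) : ℕ := m * rho m i / ell m i % 2

noncomputable def Tset (m j : ℕ) : Finset ℕ :=
  (Finset.range (2 ^ m - 1)).filter (fun i => vv m i = j)

noncomputable def Nset (m j : ℕ) : Finset ℕ :=
  (Finset.range (2 ^ m - 1)).filter (fun a => a ≠ 0 ∧ wt2 a % 2 = j)

noncomputable def epsilon (h a : ℕ) : ℕ :=
  if a = 2 ^ h - 1 then 1 else sInf {t : ℕ | 2 ^ h - 1 ≤ 2 ^ t * a}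

noncomputable def kappa (h a : ℕ) : ℕ := epsilon h a % 2

noncomputable def leader (m i : ℕ) : ℕ := sInf {x : ℕ | x ∈ coset m i}

noncomputable def uu (m h i : ℕ) : ℕ :=
  if leader m i = 1 then (vv m 1 + h + 1) % 2
  else if leader m i % 2 = 1 ∧ leader m i ≤ 2 ^ h - 1 then
    (kappa h (leader m i) + vv m (leader m i)) % 2
  else vv m (leader m i)

noncomputable def Dset (m h j : ℕ) : Finset ℕ :=
  (Finset.range (2 ^ m - 1)).filter (fun i => uu m h i = j)

noncomputable def cyclicCode (m : ℕ) (α : GaloisField 2 m) (T : Set ℕ) :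
    Submodule (ZMod 2) (Polynomial (ZMod 2)) :=
  Polynomial.degreeLT (ZMod 2) (2 ^ m - 1) ⊓
    ⨅ j ∈ T, LinearMap.ker (Polynomial.aeval (α ^ j)).toLinearMap

def minDistGE (C : Submodule (ZMod 2) (Polynomial (ZMod 2))) (d : ℕ) : Prop :=
  ∀ c ∈ C, c ≠ 0 → d ≤ c.support.card

lemma wt2_rec (n : ℕ) : wt2 n = n % 2 + wt2 (n / 2) := by
  rcases Nat.eq_zero_or_pos n with h | h
  · subst h; simp [wt2]
  · rw [wt2, Nat.digits_def' (by norm_num : (1:ℕ) < 2) h]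
    simp [wt2]

lemma wt2_split (h : ℕ) : ∀ q r : ℕ, r < 2 ^ h → wt2 (2 ^ h * q + r) = wt2 q + wt2 r := by
  induction h with
  | zero =>
    intro q r hr
    have : r = 0 := by omega
    subst this; simp [wt2]
  | succ h ih =>
    intro q r hr
    have hp : (2:ℕ) ^ (h + 1) = 2 * 2 ^ h := by ring
    have e : 2 ^ (h + 1) * q = 2 * (2 ^ h * q) := by ring
    have h2 : (2 ^ (h+1) * q + r) % 2 = r % 2 := by omega
    have h3 : (2 ^ (h+1) * q + r) / 2 = 2 ^ h * q + r / 2 := by omega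
    rw [wt2_rec (2 ^ (h+1) * q + r), h2, h3, ih q (r / 2) (by omega), wt2_rec r]
    omega

lemma wt2_compl (h : ℕ) : ∀ t : ℕ, t < 2 ^ h → wt2 (2 ^ h - 1 - t) + wt2 t = h := by
  induction h with
  | zero =>
    intro t ht
    have : t = 0 := by omega
    subst this; simp [wt2]
  | succ h ih =>
    intro t ht
    have hp : (2:ℕ) ^ (h+1) = 2 * 2 ^ h := by ring
    have hpow : (0:ℕ) < 2 ^ h := Nat.two_pow_pos h
    have h1 : (2 ^ (h+1) - 1 - t) % 2 = 1 - t % 2 := by omega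
    have h2 : (2 ^ (h+1) - 1 - t) / 2 = 2 ^ h - 1 - t / 2 := by omega
    have h3 := ih (t / 2) (by omega)
    have h4 := wt2_rec t
    have h5 := wt2_rec (2 ^ (h+1) - 1 - t)
    rw [h1, h2] at h5
    omega

lemma sum_bits : ∀ m i : ℕ, i < 2 ^ m → ∑ t ∈ Finset.range m, i / 2 ^ t % 2 = wt2 i := by
  intro m
  induction m with
  | zero =>
    intro i hi
    have : i = 0 := by omega
    subst this; simp [wt2]
  | succ m ih =>
    intro i hi
    rw [Finset.sum_range_succ']
    have e : ∀ t ∈ Finset.range m, i / 2 ^ (t + 1) % 2 = (i / 2) / 2 ^ t % 2 := by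
      intro t _
      rw [Nat.div_div_eq_div_mul, ← pow_succ']
    rw [Finset.sum_congr rfl e]
    have hp : (2:ℕ) ^ (m+1) = 2 * 2 ^ m := by ring
    rw [ih (i / 2) (by omega)]
    have := wt2_rec i
    simp only [pow_zero, Nat.div_one]
    omega

lemma wt2_le (m i : ℕ) (hi : i < 2 ^ m) : wt2 i ≤ m := by
  rw [← sum_bits m i hi]
  calc ∑ t ∈ Finset.range m, i / 2 ^ t % 2 ≤ ∑ _t ∈ Finset.range m, 1 :=
        Finset.sum_le_sum (fun t _ => by omega)
    _ = m := by simp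

lemma vv_eq (m i : ℕ) (hm : 0 < m) (hi : i < 2 ^ m - 1) :
    vv m i = (m - wt2 i) % 2 := by
  have hm2 : (2:ℕ) ≤ 2 ^ m := by
    calc (2:ℕ) = 2 ^ 1 := rfl
      _ ≤ 2 ^ m := Nat.pow_le_pow_right (by norm_num) hm
  have hiN : i % (2 ^ m - 1) = i := Nat.mod_eq_of_lt hi
  have cond_m : i * 2 ^ m % (2 ^ m - 1) = i % (2 ^ m - 1) := by
    have h2m : (2:ℕ) ^ m = (2 ^ m - 1) + 1 := by omega
    have e : i * 2 ^ m = i + i * (2 ^ m - 1) := by nth_rewrite 1 [h2m]; rw [Nat.mul_add, mul_one, add_comm]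
    rw [e, Nat.add_mul_mod_self_right]
  set S : Set ℕ := {l : ℕ | 0 < l ∧ i * 2 ^ l % (2 ^ m - 1) = i % (2 ^ m - 1)} with hS
  have hLdef : ell m i = sInf S := rfl
  have hSm : m ∈ S := ⟨hm, cond_m⟩
  have hLS : ell m i ∈ S := hLdef ▸ Nat.sInf_mem (Set.nonempty_of_mem hSm)
  obtain ⟨hLpos, hLcond⟩ := hLS
  have hLle : ell m i ≤ m := hLdef ▸ Nat.sInf_le hSm
  -- periodicity
  have per : ∀ j, i * 2 ^ (j + ell m i) % (2 ^ m - 1) = i * 2 ^ j % (2 ^ m - 1) := by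
    intro j
    have e : i * 2 ^ (j + ell m i) = (i * 2 ^ (ell m i)) * 2 ^ j := by
      rw [pow_add]; ring
    rw [e, Nat.mul_mod, hLcond, ← Nat.mul_mod]
  have per_mul : ∀ c j, i * 2 ^ (j + c * ell m i) % (2 ^ m - 1) = i * 2 ^ j % (2 ^ m - 1) := by
    intro c
    induction c with
    | zero => intro j; simp
    | succ c ih =>
      intro j
      have e : j + (c + 1) * ell m i = (j + ell m i) + c * ell m i := by ring
      rw [e, ih, per]
  -- ell divides m
  have hdvd : ell m i ∣ m := by
    by_contra hnd
    have hr : m % ell m i ≠ 0 := fun h => hnd (Nat.dvd_of_mod_eq_zero h)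
    have hrS : m % ell m i ∈ S := by
      refine ⟨Nat.pos_of_ne_zero hr, ?_⟩
      have e : m % ell m i + m / ell m i * ell m i = m := Nat.mod_add_div' m (ell m i)
      calc i * 2 ^ (m % ell m i) % (2 ^ m - 1)
          = i * 2 ^ (m % ell m i + m / ell m i * ell m i) % (2 ^ m - 1) :=
            (per_mul (m / ell m i) (m % ell m i)).symm
        _ = i * 2 ^ m % (2 ^ m - 1) := by rw [e]
        _ = i % (2 ^ m - 1) := cond_m
    have h1 : ell m i ≤ m % ell m i := hLdef ▸ Nat.sInf_le hrS
    have h2 : m % ell m i < ell m i := Nat.mod_lt m hLpos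
    omega
  obtain ⟨q, hq⟩ := hdvd
  -- 2 is a unit mod 2^m - 1
  have h1pow : (2 : ZMod (2 ^ m - 1)) ^ m = 1 := by
    have e : ((2 ^ m : ℕ) : ZMod (2 ^ m - 1)) = ((2 ^ m - 1 + 1 : ℕ) : ZMod (2 ^ m - 1)) := by
      congr 1; omega
    push_cast at e
    rw [ZMod.natCast_self, zero_add] at e
    exact e
  have hunit : IsUnit (2 : ZMod (2 ^ m - 1)) := by
    refine IsUnit.of_mul_eq_one (a := (2 : ZMod (2 ^ m - 1))) (2 ^ (m - 1)) ?_
    rw [← pow_succ', Nat.sub_add_cancel hm]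
    exact h1pow
  have cast_iff : ∀ a b : ℕ, a % (2 ^ m - 1) = b % (2 ^ m - 1) ↔
      ((a : ZMod (2 ^ m - 1)) = (b : ZMod (2 ^ m - 1))) := by
    intro a b
    rw [ZMod.natCast_eq_natCast_iff]
    exact Iff.rfl
  -- injectivity on range ell
  have inj : Set.InjOn (fun j => i * 2 ^ j % (2 ^ m - 1)) ↑(Finset.range (ell m i)) := by
    have key : ∀ j1 j2, j1 ≤ j2 → j2 < ell m i →
        i * 2 ^ j1 % (2 ^ m - 1) = i * 2 ^ j2 % (2 ^ m - 1) → j1 = j2 := by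
      intro j1 j2 hle hlt heq
      by_contra hne
      have hz : ((i * 2 ^ j1 : ℕ) : ZMod (2 ^ m - 1)) = ((i * 2 ^ j2 : ℕ) : ZMod (2 ^ m - 1)) :=
        (cast_iff _ _).mp heq
      push_cast at hz
      have e2 : (2 : ZMod (2 ^ m - 1)) ^ j2 = 2 ^ (j2 - j1) * 2 ^ j1 := by
        rw [← pow_add, Nat.sub_add_cancel hle]
      rw [e2, ← mul_assoc] at hz
      have hz2 : (i : ZMod (2 ^ m - 1)) = (i : ZMod (2 ^ m - 1)) * 2 ^ (j2 - j1) :=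
        (hunit.pow j1).mul_right_cancel hz
      have hz3 : ((i * 2 ^ (j2 - j1) : ℕ) : ZMod (2 ^ m - 1)) = (i : ZMod (2 ^ m - 1)) := by
        push_cast
        exact hz2.symm
      have hnat : i * 2 ^ (j2 - j1) % (2 ^ m - 1) = i % (2 ^ m - 1) := (cast_iff _ _).mpr hz3
      have hmemS : j2 - j1 ∈ S := ⟨by omega, hnat⟩
      have := hLdef ▸ Nat.sInf_le hmemS
      omega
    intro j1 hj1 j2 hj2 heq
    simp only [Finset.coe_range, Set.mem_Iio] at hj1 hj2
    rcases le_total j1 j2 with h | h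
    · exact key j1 j2 h hj2 heq
    · exact (key j2 j1 h hj1 heq.symm).symm
  -- rho as a count over range ell
  have hrho : rho m i = ((Finset.range (ell m i)).filter
      (fun j => i * 2 ^ j % (2 ^ m - 1) % 2 = 0)).card := by
    unfold rho coset
    rw [Finset.filter_image]
    exact Finset.card_image_of_injOn (inj.mono (by
      intro x hx
      simp only [Finset.coe_filter, Set.mem_setOf_eq, Finset.mem_range] at hx
      simp only [Finset.coe_range, Set.mem_Iio]
      exact hx.1))
  -- rotation formula
  have rot : ∀ j, j ≤ m → i * 2 ^ j % (2 ^ m - 1) = i % 2 ^ (m - j) * 2 ^ j + i / 2 ^ (m - j) := by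
    intro j hj
    have hPQ : 2 ^ (m - j) * 2 ^ j = 2 ^ m := by
      rw [← pow_add]; congr 1; omega
    have hP1 : (0:ℕ) < 2 ^ (m - j) := Nat.two_pow_pos _
    have hQ1 : (0:ℕ) < 2 ^ j := Nat.two_pow_pos _
    have hAP : i % 2 ^ (m - j) < 2 ^ (m - j) := Nat.mod_lt _ hP1
    have hQP : 2 ^ j * 2 ^ (m - j) = 2 ^ m := by rw [mul_comm]; exact hPQ
    have hBQ : i / 2 ^ (m - j) < 2 ^ j :=
      Nat.div_lt_of_lt_mul (by omega)
    have hi' : i % 2 ^ (m - j) + i / 2 ^ (m - j) * 2 ^ (m - j) = i := Nat.mod_add_div' i _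
    have e1 : i * 2 ^ j = (i % 2 ^ (m - j) * 2 ^ j + i / 2 ^ (m - j)) + i / 2 ^ (m - j) * (2 ^ m - 1) := by
      have e0 : i * 2 ^ j = i % 2 ^ (m - j) * 2 ^ j + i / 2 ^ (m - j) * (2 ^ (m - j) * 2 ^ j) := by
        conv_lhs => rw [← hi']
        ring
      rw [hPQ] at e0
      have e2 : i / 2 ^ (m - j) * 2 ^ m = i / 2 ^ (m - j) + i / 2 ^ (m - j) * (2 ^ m - 1) := by
        have h2m : (2:ℕ) ^ m = (2 ^ m - 1) + 1 := by omega
        nth_rewrite 1 [h2m]; rw [Nat.mul_add, mul_one, add_comm]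
      omega
    have hlt : i % 2 ^ (m - j) * 2 ^ j + i / 2 ^ (m - j) < 2 ^ m - 1 := by
      have hle : i % 2 ^ (m - j) * 2 ^ j + i / 2 ^ (m - j) ≤ 2 ^ m - 1 := by
        have h1 : (i % 2 ^ (m - j) + 1) * 2 ^ j ≤ 2 ^ (m - j) * 2 ^ j :=
          Nat.mul_le_mul_right _ (by omega)
        have h2 : (i % 2 ^ (m - j) + 1) * 2 ^ j = i % 2 ^ (m - j) * 2 ^ j + 2 ^ j := by ring
        omega
      rcases Nat.lt_or_ge (i % 2 ^ (m - j) * 2 ^ j + i / 2 ^ (m - j)) (2 ^ m - 1) with h | h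
      · exact h
      · exfalso
        have heq : i % 2 ^ (m - j) * 2 ^ j + i / 2 ^ (m - j) = 2 ^ m - 1 := by omega
        have e3 : (2 ^ (m - j) - 1) * 2 ^ j = 2 ^ (m - j) * 2 ^ j - 2 ^ j := by
          rw [Nat.sub_mul, one_mul]
        have hQle : 2 ^ j ≤ 2 ^ (m - j) * 2 ^ j := Nat.le_mul_of_pos_left _ hP1
        have e4 : i / 2 ^ (m - j) + i % 2 ^ (m - j) * 2 ^ j
            = (2 ^ j - 1) + (2 ^ (m - j) - 1) * 2 ^ j := by omega
        have hBeq : i / 2 ^ (m - j) = 2 ^ j - 1 := by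
          have := congrArg (· % 2 ^ j) e4
          simpa [Nat.add_mul_mod_self_right, Nat.mod_eq_of_lt hBQ,
            Nat.mod_eq_of_lt (show 2 ^ j - 1 < 2 ^ j by omega)] using this
        have hAeq : i % 2 ^ (m - j) = 2 ^ (m - j) - 1 := by
          have h5 : i % 2 ^ (m - j) * 2 ^ j = (2 ^ (m - j) - 1) * 2 ^ j := by omega
          exact Nat.eq_of_mul_eq_mul_right hQ1 h5
        rw [hAeq, hBeq] at hi'
        have e5 : (2 ^ j - 1) * 2 ^ (m - j) = 2 ^ j * 2 ^ (m - j) - 2 ^ (m - j) := by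
          rw [Nat.sub_mul, one_mul]
        have e6 : (2:ℕ) ^ j * 2 ^ (m - j) = 2 ^ m := by rw [mul_comm]; exact hPQ
        omega
    rw [e1, Nat.add_mul_mod_self_right, Nat.mod_eq_of_lt hlt]
  -- parity of rotated values
  have par : ∀ j, 1 ≤ j → j < m → i * 2 ^ j % (2 ^ m - 1) % 2 = i / 2 ^ (m - j) % 2 := by
    intro j h1 h2
    rw [rot j (le_of_lt h2)]
    have e : (2:ℕ) ^ j = 2 ^ (j - 1) * 2 := by
      rw [← pow_succ]; congr 1; omega
    have e2 : i % 2 ^ (m - j) * 2 ^ j = 2 * (i % 2 ^ (m - j) * 2 ^ (j - 1)) := by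
      rw [e]; ring
    omega
  -- sum of parities over range m equals wt2 i
  have S1 : ∑ j ∈ Finset.range m, i * 2 ^ j % (2 ^ m - 1) % 2 = wt2 i := by
    obtain ⟨m', rfl⟩ : ∃ m', m = m' + 1 := ⟨m - 1, by omega⟩
    rw [Finset.sum_range_succ']
    have f0 : i * 2 ^ 0 % (2 ^ (m' + 1) - 1) % 2 = i % 2 := by
      rw [pow_zero, mul_one, hiN]
    rw [f0]
    have step : ∀ j ∈ Finset.range m',
        i * 2 ^ (j + 1) % (2 ^ (m' + 1) - 1) % 2 = i / 2 ^ (m' - j) % 2 := by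
      intro j hj
      simp only [Finset.mem_range] at hj
      rw [par (j + 1) (by omega) (by omega)]
      congr 3
      omega
    rw [Finset.sum_congr rfl step]
    have refl1 : ∑ j ∈ Finset.range m', i / 2 ^ (m' - j) % 2
        = ∑ j ∈ Finset.range m', i / 2 ^ (j + 1) % 2 := by
      rw [← Finset.sum_range_reflect (fun j => i / 2 ^ (j + 1) % 2) m']
      refine Finset.sum_congr rfl ?_
      intro j hj
      simp only [Finset.mem_range] at hj
      rw [show m' - 1 - j + 1 = m' - j from by omega]
    rw [refl1]
    have e : ∑ j ∈ Finset.range m', i / 2 ^ (j + 1) % 2 + i % 2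
        = ∑ j ∈ Finset.range (m' + 1), i / 2 ^ j % 2 := by
      rw [Finset.sum_range_succ']
      simp
    rw [e, sum_bits (m' + 1) i (by omega)]
  -- number of even values over range m
  have S2 : ((Finset.range m).filter (fun j => i * 2 ^ j % (2 ^ m - 1) % 2 = 0)).card
      = m - wt2 i := by
    rw [Finset.card_filter]
    have e : ∀ j ∈ Finset.range m, (if i * 2 ^ j % (2 ^ m - 1) % 2 = 0 then 1 else 0)
        = 1 - i * 2 ^ j % (2 ^ m - 1) % 2 := by
      intro j _
      split_ifs with h
      · omega
      · omega
    rw [Finset.sum_congr rfl e]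
    have hsum : ∑ j ∈ Finset.range m, (1 - i * 2 ^ j % (2 ^ m - 1) % 2)
        + ∑ j ∈ Finset.range m, i * 2 ^ j % (2 ^ m - 1) % 2 = m := by
      rw [← Finset.sum_add_distrib]
      calc ∑ j ∈ Finset.range m, (1 - i * 2 ^ j % (2 ^ m - 1) % 2 + i * 2 ^ j % (2 ^ m - 1) % 2)
          = ∑ _j ∈ Finset.range m, 1 := Finset.sum_congr rfl (fun j _ => by omega)
        _ = m := by simp
    omega
  -- periodic counting
  have S3 : ∀ c, ((Finset.range (c * ell m i)).filter
      (fun j => i * 2 ^ j % (2 ^ m - 1) % 2 = 0)).card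
      = c * ((Finset.range (ell m i)).filter (fun j => i * 2 ^ j % (2 ^ m - 1) % 2 = 0)).card := by
    intro c
    induction c with
    | zero => simp
    | succ c ih =>
      have e : (c + 1) * ell m i = c * ell m i + ell m i := by ring
      rw [e, Finset.card_filter, Finset.sum_range_add]
      have e2 : ∀ x ∈ Finset.range (ell m i),
          (if i * 2 ^ (c * ell m i + x) % (2 ^ m - 1) % 2 = 0 then 1 else 0)
          = (if i * 2 ^ x % (2 ^ m - 1) % 2 = 0 then (1:ℕ) else 0) := by
        intro x _
        rw [show c * ell m i + x = x + c * ell m i from by ring, per_mul c x]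
      rw [Finset.sum_congr rfl e2, ← Finset.card_filter, ← Finset.card_filter, ih]
      ring
  -- combine
  have S4 := S3 q
  rw [show q * ell m i = m from (mul_comm q (ell m i)).trans hq.symm] at S4
  have hwle : wt2 i ≤ m := wt2_le m i (by omega)
  have gen : ∀ (M L Q E C W : ℕ), 0 < L → M = L * Q → C = Q * E → C = M - W →
      M * E / L % 2 = (M - W) % 2 := by
    intro M L Q E C W hL h1 h2 h3
    subst h1
    have e : L * Q * E = L * (Q * E) := by ring
    rw [e, Nat.mul_div_cancel_left _ hL]
    omega
  unfold vv
  rw [hrho]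
  exact gen m (ell m i) q _ _ (wt2 i) hLpos hq S4 S2

theorem stmt7 (m : ℕ) (hm4 : m % 4 = 2) (hm : 6 ≤ m) (k : ℕ)
    (hk : (1 ≤ k ∧ k ≤ 2 ^ ((m - 4) / 2)) ∨
      (2 ^ m - 2 ^ ((m - 4) / 2) - 1 ≤ k ∧ k ≤ 2 ^ m - 2)) :
    (2 ^ ((m + 4) / 2) - 1) * k % (2 ^ m - 1) ∈ Tset m 1 := by
  obtain ⟨u, hu⟩ : ∃ u, m = 2 * u := ⟨m / 2, by omega⟩
  have hu3 : 3 ≤ u := by omega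
  have huodd : u % 2 = 1 := by omega
  rw [show (m + 4) / 2 = u + 2 from by omega] at *
  rw [show (m - 4) / 2 = u - 2 from by omega] at hk
  have hPQ : 2 ^ (u + 2) * 2 ^ (u - 2) = 2 ^ m := by
    rw [← pow_add]; congr 1; omega
  have hP1 : (2:ℕ) ≤ 2 ^ (u + 2) := by
    calc (2:ℕ) = 2 ^ 1 := rfl
      _ ≤ 2 ^ (u + 2) := Nat.pow_le_pow_right (by norm_num) (by omega)
  have hQ1 : (2:ℕ) ≤ 2 ^ (u - 2) := by
    calc (2:ℕ) = 2 ^ 1 := rfl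
      _ ≤ 2 ^ (u - 2) := Nat.pow_le_pow_right (by norm_num) (by omega)
  have hQP : 2 ^ (u - 2) ≤ 2 ^ (u + 2) := Nat.pow_le_pow_right (by norm_num) (by omega)
  have hm2 : (4:ℕ) ≤ 2 ^ m := by
    calc (4:ℕ) = 2 ^ 2 := rfl
      _ ≤ 2 ^ m := Nat.pow_le_pow_right (by norm_num) (by omega)
  -- main computation for small multipliers
  have main : ∀ k', 1 ≤ k' → k' ≤ 2 ^ (u - 2) →
      (2 ^ (u + 2) - 1) * k' < 2 ^ m - 1 ∧ wt2 ((2 ^ (u + 2) - 1) * k') = u + 2 := by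
    intro k' h1 h2
    have hkP : k' ≤ 2 ^ (u + 2) := le_trans h2 hQP
    have e1 : (2 ^ (u + 2) - 1) * k' = 2 ^ (u + 2) * k' - k' := by
      rw [Nat.sub_mul, one_mul]
    have e2 : 2 ^ (u + 2) * (k' - 1) = 2 ^ (u + 2) * k' - 2 ^ (u + 2) := by
      rw [Nat.mul_sub, mul_one]
    have e3 : k' ≤ 2 ^ (u + 2) * k' := Nat.le_mul_of_pos_left _ (by omega)
    have e4 : 2 ^ (u + 2) ≤ 2 ^ (u + 2) * k' := Nat.le_mul_of_pos_right _ (by omega)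
    have hx : (2 ^ (u + 2) - 1) * k' = 2 ^ (u + 2) * (k' - 1) + (2 ^ (u + 2) - 1 - (k' - 1)) := by
      omega
    constructor
    · have b1 : (2 ^ (u + 2) - 1) * k' ≤ (2 ^ (u + 2) - 1) * 2 ^ (u - 2) :=
        Nat.mul_le_mul_left _ h2
      have b2 : (2 ^ (u + 2) - 1) * 2 ^ (u - 2) = 2 ^ (u + 2) * 2 ^ (u - 2) - 2 ^ (u - 2) := by
        rw [Nat.sub_mul, one_mul]
      omega
    · rw [hx, wt2_split (u + 2) (k' - 1) _ (by omega)]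
      have hc := wt2_compl (u + 2) (k' - 1) (by omega)
      omega
  simp only [Tset, Finset.mem_filter, Finset.mem_range]
  constructor
  · exact Nat.mod_lt _ (by omega)
  · rcases hk with ⟨h1, h2⟩ | ⟨h1, h2⟩
    · obtain ⟨hlt, hwt⟩ := main k h1 h2
      rw [Nat.mod_eq_of_lt hlt, vv_eq m _ (by omega) hlt, hwt]
      omega
    · -- large k: reduce to k' = 2^m - 1 - k
      set k' := 2 ^ m - 1 - k with hk'
      obtain ⟨hlt, hwt⟩ := main k' (by omega) (by omega)
      have hx0 : 1 ≤ (2 ^ (u + 2) - 1) * k' := Nat.one_le_iff_ne_zero.mpr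
        (Nat.mul_ne_zero (by omega) (by omega))
      have hmod : (2 ^ (u + 2) - 1) * k % (2 ^ m - 1)
          = 2 ^ m - 1 - (2 ^ (u + 2) - 1) * k' := by
        have hkeq : k = (2 ^ m - 1) - k' := by omega
        have e : (2 ^ (u + 2) - 1) * k = (2 ^ (u + 2) - 1) * (2 ^ m - 1) - (2 ^ (u + 2) - 1) * k' := by
          rw [hkeq, Nat.mul_sub]
        have e2 : (2 ^ m - 1) * (2 ^ (u + 2) - 1 - 1) = (2 ^ (u + 2) - 1) * (2 ^ m - 1) - (2 ^ m - 1) := by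
          rw [Nat.mul_sub, mul_one, mul_comm ((2:ℕ) ^ m - 1) ((2:ℕ) ^ (u + 2) - 1)]
        have e3 : (2 ^ m - 1) ≤ (2 ^ (u + 2) - 1) * (2 ^ m - 1) :=
          Nat.le_mul_of_pos_left _ (by omega)
        have e4 : (2 ^ (u + 2) - 1) * k
            = (2 ^ m - 1) * (2 ^ (u + 2) - 1 - 1) + ((2 ^ m - 1) - (2 ^ (u + 2) - 1) * k') := by
          omega
        rw [e4, Nat.mul_add_mod, Nat.mod_eq_of_lt (by omega)]
      rw [hmod]
      have hcm := wt2_compl m ((2 ^ (u + 2) - 1) * k') (by omega)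
      rw [vv_eq m _ (by omega) (by omega)]
      omega
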